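/- Let a, b, c, d ∈ ℂ with |a|² − |b|² = 1 and |c|² − |d|² = 1, and let z₀ ∈ ℂ with |z₀| = 1. The maps φ_{a,b} and φ_{c,d} are complex differentiable on a neighbourhood of the unit circle (their poles −conj(a)/conj(b) and −conj(c)/conj(d) lie outside the closed unit disc). If φ_{a,b}(z₀) = φ_{c,d}(z₀), φ_{a,b}'(z₀) = φ_{c,d}'(z₀) and φ_{a,b}''(z₀) = φ_{c,d}''(z₀) (first and second complex derivatives), then φ_{a,b}(z) = φ_{c,d}(z) for every z ∈ ℂ with |z| = 1. -/

import Mathlib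

/-- The Möbius transformation of the circle associated to `a b : ℂ`
with `|a|² - |b|² = 1`. -/
noncomputable def mobiusMap (a b z : ℂ) : ℂ :=
  (a * z + b) / ((starRingEnd ℂ) b * z + (starRingEnd ℂ) a)

lemma det_one (a b : ℂ) (hab : ‖a‖ ^ 2 - ‖b‖ ^ 2 = 1) :
    a * (starRingEnd ℂ) a - b * (starRingEnd ℂ) b = 1 := by
  rw [Complex.mul_conj, Complex.mul_conj, ← Complex.ofReal_sub,
    ← Complex.sq_norm, ← Complex.sq_norm, hab, Complex.ofReal_one]

lemma denom_ne (a b : ℂ) (hab : ‖a‖ ^ 2 - ‖b‖ ^ 2 = 1)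
    (z : ℂ) (hz : ‖z‖ = 1) : (starRingEnd ℂ) b * z + (starRingEnd ℂ) a ≠ 0 := by
  intro h
  have h2 : (starRingEnd ℂ) a = -((starRingEnd ℂ) b * z) := by
    linear_combination h
  have h3 : ‖a‖ = ‖b‖ := by
    have := congrArg norm h2
    simpa [hz] using this
  rw [h3] at hab
  simp at hab

lemma hasDerivAt_mobius (a b : ℂ) (hdet : a * (starRingEnd ℂ) a - b * (starRingEnd ℂ) b = 1)
    (z : ℂ) (hz : (starRingEnd ℂ) b * z + (starRingEnd ℂ) a ≠ 0) :
    HasDerivAt (mobiusMap a b) ((((starRingEnd ℂ) b * z + (starRingEnd ℂ) a) ^ 2)⁻¹) z := by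
  have h1 : HasDerivAt (fun w : ℂ => a * w + b) a z := by
    simpa using ((hasDerivAt_id z).const_mul a).add_const b
  have h2 : HasDerivAt (fun w : ℂ => (starRingEnd ℂ) b * w + (starRingEnd ℂ) a)
      ((starRingEnd ℂ) b) z := by
    simpa using ((hasDerivAt_id z).const_mul ((starRingEnd ℂ) b)).add_const ((starRingEnd ℂ) a)
  have := h1.div h2 hz
  refine this.congr_deriv (Eq.symm ?_)
  rw [inv_eq_one_div]
  congr 1
  linear_combination -hdet

lemma hasDerivAt_mobius2 (a b : ℂ)
    (z : ℂ) (hz : (starRingEnd ℂ) b * z + (starRingEnd ℂ) a ≠ 0) :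
    HasDerivAt (fun w => (((starRingEnd ℂ) b * w + (starRingEnd ℂ) a) ^ 2)⁻¹)
      (-(2 * (starRingEnd ℂ) b) / ((starRingEnd ℂ) b * z + (starRingEnd ℂ) a) ^ 3) z := by
  have h2 : HasDerivAt (fun w : ℂ => (starRingEnd ℂ) b * w + (starRingEnd ℂ) a)
      ((starRingEnd ℂ) b) z := by
    simpa using ((hasDerivAt_id z).const_mul ((starRingEnd ℂ) b)).add_const ((starRingEnd ℂ) a)
  have h3 := (h2.pow 2).inv (pow_ne_zero 2 hz)
  refine h3.congr_deriv (Eq.symm ?_)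
  simp only [Pi.pow_apply]
  field_simp
  ring

lemma deriv2_mobius (a b : ℂ) (hdet : a * (starRingEnd ℂ) a - b * (starRingEnd ℂ) b = 1)
    (z₀ : ℂ) (hz₀ : (starRingEnd ℂ) b * z₀ + (starRingEnd ℂ) a ≠ 0) :
    deriv (deriv (mobiusMap a b)) z₀ =
      -(2 * (starRingEnd ℂ) b) / ((starRingEnd ℂ) b * z₀ + (starRingEnd ℂ) a) ^ 3 := by
  have hS : IsOpen {w : ℂ | (starRingEnd ℂ) b * w + (starRingEnd ℂ) a ≠ 0} := by
    have : Continuous fun w : ℂ => (starRingEnd ℂ) b * w + (starRingEnd ℂ) a := by continuity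
    exact isOpen_compl_singleton.preimage this
  have heq : deriv (mobiusMap a b) =ᶠ[nhds z₀]
      (fun w => (((starRingEnd ℂ) b * w + (starRingEnd ℂ) a) ^ 2)⁻¹) := by
    filter_upwards [hS.mem_nhds hz₀] with w hw
    exact (hasDerivAt_mobius a b hdet w hw).deriv
  rw [heq.deriv_eq]
  exact (hasDerivAt_mobius2 a b z₀ hz₀).deriv

/-- Möbius transformations of the circle are complex differentiable
(indeed analytic) on a neighbourhood of the unit circle, and such a
transformation is determined by its value together with its first and second
complex derivatives at a single point of the circle. -/
theorem mobius_determined_by_two_jets_at_a_point (a b c d : ℂ)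
    (hab : ‖a‖ ^ 2 - ‖b‖ ^ 2 = 1)
    (hcd : ‖c‖ ^ 2 - ‖d‖ ^ 2 = 1)
    (z₀ : ℂ) (hz₀ : ‖z₀‖ = 1) :
    (∀ z : ℂ, ‖z‖ = 1 →
      AnalyticAt ℂ (mobiusMap a b) z ∧ AnalyticAt ℂ (mobiusMap c d) z) ∧
    (mobiusMap a b z₀ = mobiusMap c d z₀ →
      deriv (mobiusMap a b) z₀ = deriv (mobiusMap c d) z₀ →
      deriv (deriv (mobiusMap a b)) z₀ = deriv (deriv (mobiusMap c d)) z₀ →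
      ∀ z : ℂ, ‖z‖ = 1 → mobiusMap a b z = mobiusMap c d z) := by
  have hdet1 := det_one a b hab
  have hdet2 := det_one c d hcd
  constructor
  · intro z hz
    constructor
    · exact ((analyticAt_const.mul (analyticAt_id)).add analyticAt_const).div
        ((analyticAt_const.mul (analyticAt_id)).add analyticAt_const) (denom_ne a b hab z hz)
    · exact ((analyticAt_const.mul (analyticAt_id)).add analyticAt_const).div
        ((analyticAt_const.mul (analyticAt_id)).add analyticAt_const) (denom_ne c d hcd z hz)
  · intro _ h1 h2 z hz
    have hu := denom_ne a b hab z₀ hz₀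
    have hv := denom_ne c d hcd z₀ hz₀
    rw [(hasDerivAt_mobius a b hdet1 z₀ hu).deriv, (hasDerivAt_mobius c d hdet2 z₀ hv).deriv] at h1
    rw [deriv2_mobius a b hdet1 z₀ hu, deriv2_mobius c d hdet2 z₀ hv] at h2
    set u := (starRingEnd ℂ) b * z₀ + (starRingEnd ℂ) a with hu_def
    set v := (starRingEnd ℂ) d * z₀ + (starRingEnd ℂ) c with hv_def
    have hsq : u ^ 2 = v ^ 2 := by
      field_simp at h1
      exact h1.symm
    field_simp at h2
    have hcase : u = v ∨ u = -v := by
      have hfac : (u - v) * (u + v) = 0 := by linear_combination hsq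
      rcases mul_eq_zero.mp hfac with h | h
      · exact Or.inl (sub_eq_zero.mp h)
      · exact Or.inr (eq_neg_of_add_eq_zero_left h)
    rcases hcase with h | h
    · -- u = v : then b = d and a = c
      have hb : (starRingEnd ℂ) b = (starRingEnd ℂ) d := by
        have h3 : ((starRingEnd ℂ) b - (starRingEnd ℂ) d) * v ^ 3 = 0 := by
          linear_combination -h2 + (starRingEnd ℂ) d * (u ^ 2 + u * v + v ^ 2) * h
        rcases mul_eq_zero.mp h3 with h4 | h4
        · exact sub_eq_zero.mp h4
        · exact absurd h4 (pow_ne_zero 3 hv)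
      rw [hu_def, hv_def] at h
      have ha : (starRingEnd ℂ) a = (starRingEnd ℂ) c := by
        linear_combination h - z₀ * hb
      have hBD : b = d := by simpa using congrArg (starRingEnd ℂ) hb
      have hAC : a = c := by simpa using congrArg (starRingEnd ℂ) ha
      rw [hAC, hBD]
    · -- u = -v : then b = -d and a = -c
      have hb : (starRingEnd ℂ) b = -(starRingEnd ℂ) d := by
        have h3 : ((starRingEnd ℂ) b + (starRingEnd ℂ) d) * v ^ 3 = 0 := by
          linear_combination -h2 + (starRingEnd ℂ) d * (u ^ 2 - u * v + v ^ 2) * h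
        rcases mul_eq_zero.mp h3 with h4 | h4
        · exact eq_neg_of_add_eq_zero_left h4
        · exact absurd h4 (pow_ne_zero 3 hv)
      rw [hu_def, hv_def] at h
      have ha : (starRingEnd ℂ) a = -(starRingEnd ℂ) c := by
        linear_combination h - z₀ * hb
      have hBD : b = -d := by simpa using congrArg (starRingEnd ℂ) hb
      have hAC : a = -c := by simpa using congrArg (starRingEnd ℂ) ha
      rw [hAC, hBD]
      simp only [mobiusMap, map_neg]
      rw [show -c * z + -d = -(c * z + d) by ring,
        show -(starRingEnd ℂ) d * z + -(starRingEnd ℂ) c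
          = -((starRingEnd ℂ) d * z + (starRingEnd ℂ) c) by ring,
        neg_div_neg_eq]
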